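/- Let a be a positive integer with n = ⌊√a⌋, write a = n^2 + b with 0 ≤ b ≤ 2n. For positive integers k and s, if s ≤ k·(n + √(a+1))/(b+1), then (s·n + k)^2 ≥ s^2·(a+1). -/
import Mathlib


theorem stmt_9 (a n b k s : ℕ) (ha : 0 < a) (hn : n = Nat.sqrt a)
    (hab : a = n^2 + b) (hb : b ≤ 2*n) (hk : 0 < k) (hs : 0 < s)
    (h : (s : ℝ) ≤ k * ((n : ℝ) + Real.sqrt (a+1)) / (b+1)) :
    ((s : ℝ) * n + k)^2 ≥ (s : ℝ)^2 * (a+1) := by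
  set r := Real.sqrt ((a : ℝ) + 1) with hr
  have hr0 : (0:ℝ) ≤ r := Real.sqrt_nonneg _
  have hr2 : r ^ 2 = (a : ℝ) + 1 := Real.sq_sqrt (by positivity)
  have hb1 : (0:ℝ) < (b : ℝ) + 1 := by positivity
  have ha' : (a : ℝ) = (n : ℝ)^2 + b := by exact_mod_cast hab
  have hfac : (r - n) * (r + n) = (b : ℝ) + 1 := by ring_nf; nlinarith [hr2]
  have hrn : (0:ℝ) < r + n := by nlinarith
  have h1 : (s : ℝ) * ((b : ℝ) + 1) ≤ k * (r + n) := by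
    have := (le_div_iff₀ hb1).mp h; nlinarith
  have h2 : (s : ℝ) * (r - n) ≤ k := by
    rw [← hfac] at h1
    nlinarith
  have h3 : (s : ℝ) * r ≤ (s : ℝ) * n + k := by nlinarith
  nlinarith [mul_nonneg (Nat.cast_nonneg s (α := ℝ)) hr0, sq_nonneg ((s:ℝ)*r)]
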